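/- Let E be a real normed vector space, let A, B ⊆ E be closed sets with A ∩ B = {p}, let x ∈ A with x ≠ p and y ∈ B with y ≠ p, and let γ : [0,1] → E be a continuous path with image contained in A ∪ B, γ(0) = x and γ(1) = y. Then there exists t ∈ [0,1] with γ(t) = p, and the length (total variation, eVariationOn γ over [0,1]) of γ is at least ‖x − p‖ + ‖p − y‖. -/

import Mathlib

open Filter Set

/-- If `A`, `B` are closed sets with `A ∩ B = {p}` and `γ` is a continuous path in `A ∪ B`
from a point `x ∈ A \ {p}` to a point `y ∈ B \ {p}`, then `γ` passes through `p` and its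
length (total variation) is at least `‖x - p‖ + ‖p - y‖`. -/
theorem path_through_intersection_length_bound
    {E : Type*} [NormedAddCommGroup E] [NormedSpace ℝ E]
    (A B : Set E) (hA : IsClosed A) (hB : IsClosed B) (p : E) (hAB : A ∩ B = {p})
    (x y : E) (hx : x ∈ A) (hxp : x ≠ p) (hy : y ∈ B) (hyp : y ≠ p)
    (γ : ℝ → E) (hcont : ContinuousOn γ (Set.Icc 0 1))
    (him : γ '' Set.Icc 0 1 ⊆ A ∪ B) (h0 : γ 0 = x) (h1 : γ 1 = y) :
    (∃ t ∈ Set.Icc (0 : ℝ) 1, γ t = p) ∧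
      ENNReal.ofReal (‖x - p‖ + ‖p - y‖) ≤ eVariationOn γ (Set.Icc 0 1) := by
  have hpre : IsPreconnected (Set.Icc (0:ℝ) 1) := isPreconnected_Icc
  have hcA : IsClosed (Set.Icc (0:ℝ) 1 ∩ γ ⁻¹' A) :=
    hcont.preimage_isClosed_of_isClosed isClosed_Icc hA
  have hcB : IsClosed (Set.Icc (0:ℝ) 1 ∩ γ ⁻¹' B) :=
    hcont.preimage_isClosed_of_isClosed isClosed_Icc hB
  have hcover : Set.Icc (0:ℝ) 1 ⊆ (Set.Icc (0:ℝ) 1 ∩ γ ⁻¹' A) ∪ (Set.Icc (0:ℝ) 1 ∩ γ ⁻¹' B) := by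
    intro u hu
    rcases him ⟨u, hu, rfl⟩ with h | h
    · exact Or.inl ⟨hu, h⟩
    · exact Or.inr ⟨hu, h⟩
  have h01 : (0:ℝ) ∈ Set.Icc (0:ℝ) 1 := ⟨le_refl 0, zero_le_one⟩
  have h11 : (1:ℝ) ∈ Set.Icc (0:ℝ) 1 := ⟨zero_le_one, le_refl 1⟩
  obtain ⟨t, ht, htAB⟩ :=
    isPreconnected_closed_iff.1 hpre _ _ hcA hcB hcover
      ⟨0, h01, h01, by rw [Set.mem_preimage, h0]; exact hx⟩
      ⟨1, h11, h11, by rw [Set.mem_preimage, h1]; exact hy⟩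
  have htI : t ∈ Set.Icc (0:ℝ) 1 := ht
  have htp : γ t = p := by
    have : γ t ∈ A ∩ B := ⟨htAB.1.2, htAB.2.2⟩
    rw [hAB] at this
    exact this
  refine ⟨⟨t, htI, htp⟩, ?_⟩
  have key := eVariationOn.Icc_add_Icc γ (s := Set.Icc (0:ℝ) 1) htI.1 htI.2 htI
  have e1 : edist (γ 0) (γ t) ≤ eVariationOn γ (Set.Icc (0:ℝ) 1 ∩ Set.Icc 0 t) :=
    eVariationOn.edist_le γ ⟨h01, le_refl 0, htI.1⟩ ⟨htI, htI.1, le_refl t⟩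
  have e2 : edist (γ t) (γ 1) ≤ eVariationOn γ (Set.Icc (0:ℝ) 1 ∩ Set.Icc t 1) :=
    eVariationOn.edist_le γ ⟨htI, le_refl t, htI.2⟩ ⟨h11, htI.2, le_refl 1⟩
  have hsub : Set.Icc (0:ℝ) 1 ∩ Set.Icc 0 1 = Set.Icc (0:ℝ) 1 := Set.inter_self _
  calc ENNReal.ofReal (‖x - p‖ + ‖p - y‖)
      = ENNReal.ofReal ‖x - p‖ + ENNReal.ofReal ‖p - y‖ :=
        ENNReal.ofReal_add (norm_nonneg _) (norm_nonneg _)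
    _ = edist (γ 0) (γ t) + edist (γ t) (γ 1) := by
        rw [h0, h1, htp, edist_eq_enorm_sub, edist_eq_enorm_sub, enorm_eq_nnnorm, enorm_eq_nnnorm,
          ENNReal.ofReal_eq_coe_nnreal (norm_nonneg _), ENNReal.ofReal_eq_coe_nnreal (norm_nonneg _)]
        norm_cast
    _ ≤ eVariationOn γ (Set.Icc (0:ℝ) 1 ∩ Set.Icc 0 t)
        + eVariationOn γ (Set.Icc (0:ℝ) 1 ∩ Set.Icc t 1) := add_le_add e1 e2
    _ = eVariationOn γ (Set.Icc (0:ℝ) 1 ∩ Set.Icc 0 1) := key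
    _ = eVariationOn γ (Set.Icc (0:ℝ) 1) := by rw [hsub]
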